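/- Let κ be an infinite cardinal, let G be a graph with vertex enumeration (v_i : i < κ), and suppose {C_j^m : j, m < κ} is a family of sets of vertices satisfying: (1) C_j^m ⊆ N(v_j) ∩ {v_i : i > j}; (2) C_i^m ∩ C_j^m = ∅ for i ≠ j; (3) C_j^m ∩ C_j^n = ∅ for m ≠ n; (4) |C_j^m| = κ; and (5) whenever v_j v_i ∈ E(G) with i > j, there exists m < κ with v_i ∈ C_j^m. Then the graphs F^m defined by E(F^m) = {v_j v_i : v_i ∈ C_j^m, j < i < κ} on vertex set V(G) form a factorization of G into κ spanning κ-regular forests. -/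

import Mathlib

open Cardinal

universe u

/-- `G` is `κ`-regular: every vertex has degree (neighbourhood cardinality) exactly `κ`. -/
def SimpleGraph.CardRegular {V : Type u} (G : SimpleGraph V) (κ : Cardinal.{u}) : Prop :=
  ∀ v : V, #(G.neighborSet v) = κ

/-- `G` has no isolated vertices. -/
def SimpleGraph.NoIsolatedVerts {V : Type u} (G : SimpleGraph V) : Prop :=
  ∀ v : V, ∃ w : V, G.Adj v w

/-- A factorization of `G`: a family of spanning subgraphs, pairwise edge-disjoint,
whose edge sets cover `E(G)`. -/
def SimpleGraph.IsFactorization {V : Type u} {ι : Type u} (G : SimpleGraph V)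
    (F : ι → SimpleGraph V) : Prop :=
  (∀ i, F i ≤ G) ∧ (Pairwise fun i j => Disjoint (F i).edgeSet (F j).edgeSet) ∧
    (⋃ i, (F i).edgeSet) = G.edgeSet

/-- In the forest `F` rooted at `v₀`, `u` is a child of `w`. -/
def SimpleGraph.IsChild {V : Type u} (F : SimpleGraph V) (v₀ u w : V) : Prop :=
  F.Adj w u ∧ F.Reachable v₀ u ∧ F.dist v₀ u = F.dist v₀ w + 1

/-- The graph with edges `v_j v_i` for `v_i ∈ C j`, `j < i`. -/
def childGraph {V I : Type u} [LT I] (v : I ≃ V) (C : I → Set V) : SimpleGraph V :=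
  SimpleGraph.fromEdgeSet {e | ∃ i j : I, j < i ∧ (v i : V) ∈ C j ∧ e = s(v j, v i)}

/-- Disjoint union of `ι`-many copies of `T`. -/
def copiesGraph (ι : Type u) {W : Type u} (T : SimpleGraph W) : SimpleGraph (ι × W) where
  Adj p q := p.1 = q.1 ∧ T.Adj p.2 q.2
  symm := ⟨by rintro p q ⟨h1, h2⟩; exact ⟨h1.symm, h2.symm⟩⟩
  loopless := ⟨by rintro p ⟨-, h⟩; exact T.loopless.irrefl _ h⟩

/-- A family `{C_j^m}` satisfying (C1)–(C5) yields a factorization of `G` into `κ`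
spanning `κ`-regular forests. -/
lemma childGraph_adj {V I : Type u} [LinearOrder I] (v : I ≃ V) (C : I → Set V) (a b : I) :
    (childGraph v C).Adj (v a) (v b) ↔
      (a < b ∧ (v b : V) ∈ C a) ∨ (b < a ∧ (v a : V) ∈ C b) := by
  rw [childGraph, SimpleGraph.fromEdgeSet_adj]
  constructor
  · rintro ⟨⟨i, j, hji, hmem, he⟩, hne⟩
    rw [Sym2.eq_iff] at he
    rcases he with ⟨h1, h2⟩ | ⟨h1, h2⟩
    · obtain rfl := v.injective h1; obtain rfl := v.injective h2
      exact Or.inl ⟨hji, hmem⟩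
    · obtain rfl := v.injective h1; obtain rfl := v.injective h2
      exact Or.inr ⟨hji, hmem⟩
  · rintro (⟨h, hm⟩ | ⟨h, hm⟩)
    · exact ⟨⟨b, a, h, hm, rfl⟩, fun he => h.ne (v.injective he)⟩
    · exact ⟨⟨a, b, h, hm, Sym2.eq_swap⟩, fun he => h.ne' (v.injective he)⟩

open SimpleGraph Walk in
lemma childGraph_isAcyclic {V I : Type u} [LinearOrder I] (v : I ≃ V) (C : I → Set V)
    (hdisj : Pairwise fun i j => Disjoint (C i) (C j)) : (childGraph v C).IsAcyclic := by
  have H : ∀ (u : V) (d : (childGraph v C).Walk u u), d.IsCycle →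
      (∀ w ∈ d.support, v.symm w ≤ v.symm u) → False := by
    intro u d hd hmax
    cases d with
    | nil => exact Walk.IsCycle.not_of_nil hd
    | cons h q =>
      rename_i b
      rw [Walk.cons_isCycle_iff] at hd
      obtain ⟨hq_path, hedge⟩ := hd
      have hbu : b ≠ u := h.ne'
      obtain ⟨c, h', r, hr⟩ := Walk.exists_eq_cons_of_ne (Ne.symm hbu) q.reverse
      have hcq : s(u, c) ∈ q.edges := by
        have : s(u, c) ∈ q.reverse.edges := by rw [hr]; simp
        rwa [Walk.edges_reverse, List.mem_reverse] at this
      have hbc : b ≠ c := fun he => hedge (by cases he; exact hcq)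
      have hbs : b ∈ (Walk.cons h q).support := by simp
      have hcs : c ∈ (Walk.cons h q).support := by
        have := q.snd_mem_support_of_mem_edges hcq
        simp [this]
      have hblt : v.symm b < v.symm u :=
        lt_of_le_of_ne (hmax b hbs) (fun he => hbu (v.symm.injective he))
      have hclt : v.symm c < v.symm u :=
        lt_of_le_of_ne (hmax c hcs) (fun he => h'.ne' (v.symm.injective he))
      have hub : (childGraph v C).Adj (v (v.symm u)) (v (v.symm b)) := by simpa using h
      have huc : (childGraph v C).Adj (v (v.symm u)) (v (v.symm c)) := by simpa using h'
      have hub' : u ∈ C (v.symm b) := by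
        rcases (childGraph_adj v C _ _).1 hub with ⟨hlt, _⟩ | ⟨_, hmem⟩
        · exact absurd hlt (not_lt_of_gt hblt)
        · simpa using hmem
      have huc' : u ∈ C (v.symm c) := by
        rcases (childGraph_adj v C _ _).1 huc with ⟨hlt, _⟩ | ⟨_, hmem⟩
        · exact absurd hlt (not_lt_of_gt hclt)
        · simpa using hmem
      have hne : v.symm b ≠ v.symm c := fun he => hbc (v.symm.injective he)
      exact Set.disjoint_left.1 (hdisj hne) hub' huc'
  classical
  intro x c hc
  have hne : c.support.toFinset.Nonempty := by
    simp [List.toFinset_nonempty_iff]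
  obtain ⟨u, hus, hmax⟩ := c.support.toFinset.exists_max_image (fun w => v.symm w) hne
  rw [List.mem_toFinset] at hus
  refine H u (c.rotate u hus) (hc.rotate hus) ?_
  intro w hw
  rw [Walk.support_eq_cons] at hw
  rcases List.mem_cons.1 hw with rfl | hw
  · exact le_refl _
  · have hw' : w ∈ c.support := by
      have hperm := (SimpleGraph.Walk.support_rotate c u hus).perm
      exact List.mem_of_mem_tail (hperm.mem_iff.1 hw)
    exact hmax w (List.mem_toFinset.2 hw')

theorem stmt_13 (κ : Cardinal.{u}) (hκ : ℵ₀ ≤ κ) {V : Type u} (G : SimpleGraph V)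
    (v : κ.ord.ToType ≃ V) (C : κ.ord.ToType → κ.ord.ToType → Set V)
    (hC1 : ∀ j m, C j m ⊆ G.neighborSet (v j) ∩ {x : V | ∃ i, j < i ∧ x = v i})
    (hC2 : ∀ m, Pairwise fun i j => Disjoint (C i m) (C j m))
    (hC3 : ∀ j, Pairwise fun m n => Disjoint (C j m) (C j n))
    (hC4 : ∀ j m, #(C j m) = κ)
    (hC5 : ∀ i j, j < i → G.Adj (v j) (v i) → ∃ m, v i ∈ C j m) :
    G.IsFactorization (fun m => childGraph v (fun j => C j m)) ∧
      ∀ m, (childGraph v (fun j => C j m)).IsAcyclic ∧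
        (childGraph v (fun j => C j m)).CardRegular κ := by
  set F : κ.ord.ToType → SimpleGraph V := fun m => childGraph v (fun j => C j m) with hF
  have hadj : ∀ m (a b : κ.ord.ToType), (F m).Adj (v a) (v b) ↔
      (a < b ∧ (v b : V) ∈ C a m) ∨ (b < a ∧ (v a : V) ∈ C b m) :=
    fun m a b => childGraph_adj v (fun j => C j m) a b
  have hadj' : ∀ m (x y : V), (F m).Adj x y ↔
      (v.symm x < v.symm y ∧ y ∈ C (v.symm x) m) ∨
      (v.symm y < v.symm x ∧ x ∈ C (v.symm y) m) := by
    intro m x y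
    have := hadj m (v.symm x) (v.symm y)
    simpa using this
  have hle : ∀ m, F m ≤ G := by
    intro m x y hxy
    rcases (hadj' m x y).1 hxy with ⟨_, hm⟩ | ⟨_, hm⟩
    · have := (hC1 (v.symm x) m hm).1
      simpa [SimpleGraph.mem_neighborSet] using this
    · have := (hC1 (v.symm y) m hm).1
      rw [SimpleGraph.mem_neighborSet] at this
      simpa using this.symm
  refine ⟨⟨hle, ?_, ?_⟩, ?_⟩
  · -- pairwise disjoint edge sets
    intro m n hmn
    rw [Set.disjoint_left]
    intro e hem hen
    induction e using Sym2.ind with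
    | _ x y =>
      rw [SimpleGraph.mem_edgeSet] at hem hen
      rcases (hadj' m x y).1 hem with ⟨h1, hm1⟩ | ⟨h1, hm1⟩ <;>
        rcases (hadj' n x y).1 hen with ⟨h2, hm2⟩ | ⟨h2, hm2⟩
      · exact Set.disjoint_left.1 (hC3 (v.symm x) hmn) hm1 hm2
      · exact absurd h1 (asymm h2)
      · exact absurd h1 (asymm h2)
      · exact Set.disjoint_left.1 (hC3 (v.symm y) hmn) hm1 hm2
  · -- union of edge sets
    ext e
    induction e using Sym2.ind with
    | _ x y =>
      simp only [Set.mem_iUnion, SimpleGraph.mem_edgeSet]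
      constructor
      · rintro ⟨m, hm⟩; exact hle m hm
      · intro h
        rcases lt_trichotomy (v.symm x) (v.symm y) with hlt | heq | hlt
        · obtain ⟨m, hm⟩ := hC5 (v.symm y) (v.symm x) hlt (by simpa using h)
          exact ⟨m, (hadj' m x y).2 (Or.inl ⟨hlt, by simpa using hm⟩)⟩
        · exact absurd (by simpa using congrArg v heq) h.ne
        · obtain ⟨m, hm⟩ := hC5 (v.symm x) (v.symm y) hlt (by simpa using h.symm)
          exact ⟨m, (hadj' m x y).2 (Or.inr ⟨hlt, by simpa using hm⟩)⟩
  · -- acyclic and regular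
    intro m
    refine ⟨childGraph_isAcyclic v _ (hC2 m), ?_⟩
    intro x
    set j := v.symm x with hj
    set S : Set V := {y | ∃ a, a < j ∧ x ∈ C a m ∧ y = v a} with hS
    have hsub1 : C j m ⊆ (F m).neighborSet x := by
      intro y hy
      obtain ⟨_, i, hji, rfl⟩ := hC1 j m hy
      rw [SimpleGraph.mem_neighborSet]
      exact (hadj' m x (v i)).2 (Or.inl ⟨by simpa [hj] using hji, by simpa [hj] using hy⟩)
    have hsub2 : (F m).neighborSet x ⊆ C j m ∪ S := by
      intro y hy
      rw [SimpleGraph.mem_neighborSet] at hy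
      rcases (hadj' m x y).1 hy with ⟨hlt, hm1⟩ | ⟨hlt, hm1⟩
      · exact Or.inl hm1
      · exact Or.inr ⟨v.symm y, hlt, hm1, (v.apply_symm_apply y).symm⟩
    have hSsub : S.Subsingleton := by
      rintro y1 ⟨a1, _, hx1, rfl⟩ y2 ⟨a2, _, hx2, rfl⟩
      congr 1
      by_contra hne
      exact Set.disjoint_left.1 (hC2 m hne) hx1 hx2
    have hS1 : #S ≤ 1 := Cardinal.mk_le_one_iff_set_subsingleton.2 hSsub
    refine le_antisymm ?_ ?_
    · calc #((F m).neighborSet x) ≤ #(↥(C j m ∪ S)) := Cardinal.mk_le_mk_of_subset hsub2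
        _ ≤ #(C j m) + #S := Cardinal.mk_union_le _ _
        _ ≤ κ + 1 := by rw [hC4]; exact add_le_add_right hS1 κ
        _ ≤ κ + κ := add_le_add_right (le_trans Cardinal.one_le_aleph0 hκ) κ
        _ = κ := Cardinal.add_eq_self hκ
    · calc κ = #(C j m) := (hC4 j m).symm
        _ ≤ #((F m).neighborSet x) := Cardinal.mk_le_mk_of_subset hsub1
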